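/- Let $A$ be an $\bold{L}$-bigraded Hopf algebra over a field $\Bbb{K}$ and $p$ an antisymmetric bicharacter on $\bold{L}$. Then the twisted multiplication $a \cdot b = p(\lambda,\lambda')p(\mu,\mu')^{-1} ab$ (for homogeneous $a \in A_{\lambda,\mu}$, $b \in A_{\lambda',\mu'}$) together with the original unit, counit, comultiplication and antipode makes $A_p = (A, i, m_p, \epsilon, \Delta, S)$ into an $\bold{L}$-bigraded Hopf algebra. In particular, the counit $\epsilon$ and the comultiplication $\Delta$ are algebra homomorphisms for the new product, and $S$ remains an antipode. -/

import Mathlib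

open TensorProduct

/-- The multiplication induced on `A ⊗ A` by a bilinear multiplication on `A`:
`(a ⊗ b)(c ⊗ d) = (ac) ⊗ (bd)`. -/
noncomputable def tsqMul {K A : Type*} [Field K] [AddCommGroup A] [Module K A]
    (mul : A →ₗ[K] A →ₗ[K] A) :
    (A ⊗[K] A) ⊗[K] (A ⊗[K] A) →ₗ[K] A ⊗[K] A :=
  (TensorProduct.map (TensorProduct.lift mul) (TensorProduct.lift mul)).comp
    (TensorProduct.tensorTensorTensorComm K A A A A).toLinearMap

/-- An `L`-bigraded Hopf algebra over `K`, given by explicit structure maps: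
a multiplication, unit, counit, comultiplication, antipode, and an internal
`L × L`-grading satisfying the compatibilities (1)-(4) of the paper. -/
structure LBigradedHopf (K L A : Type*) [Field K] [AddCommGroup L]
    [DecidableEq L] [AddCommGroup A] [Module K A] where
  mul : A →ₗ[K] A →ₗ[K] A
  one : A
  counit : A →ₗ[K] K
  comul : A →ₗ[K] A ⊗[K] A
  antipode : A →ₗ[K] A
  grade : L × L → Submodule K A
  mul_assoc' : ∀ a b c, mul (mul a b) c = mul a (mul b c)
  one_mul' : ∀ a, mul one a = a
  mul_one' : ∀ a, mul a one = a
  internal : DirectSum.IsInternal grade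
  one_mem : one ∈ grade 0
  mul_mem : ∀ i j : L × L, ∀ a ∈ grade i, ∀ b ∈ grade j, mul a b ∈ grade (i + j)
  coassoc : ∀ a, TensorProduct.map LinearMap.id comul (comul a) =
    (TensorProduct.assoc K A A A) (TensorProduct.map comul LinearMap.id (comul a))
  counit_left : ∀ a,
    (TensorProduct.lid K A) (TensorProduct.map counit LinearMap.id (comul a)) = a
  counit_right : ∀ a,
    (TensorProduct.rid K A) (TensorProduct.map LinearMap.id counit (comul a)) = a
  counit_one : counit one = 1
  counit_mul : ∀ a b, counit (mul a b) = counit a * counit b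
  comul_one : comul one = one ⊗ₜ[K] one
  comul_mul : ∀ a b, comul (mul a b) = tsqMul mul (comul a ⊗ₜ[K] comul b)
  antipode_left : ∀ a,
    TensorProduct.lift mul (TensorProduct.map antipode LinearMap.id (comul a)) =
      counit a • one
  antipode_right : ∀ a,
    TensorProduct.lift mul (TensorProduct.map LinearMap.id antipode (comul a)) =
      counit a • one
  comul_grade : ∀ i : L × L, ∀ a ∈ grade i, comul a ∈
    ⨆ ν : L, LinearMap.range
      (TensorProduct.map (grade (i.1, ν)).subtype (grade (-ν, i.2)).subtype)
  counit_grade : ∀ i : L × L, i.1 ≠ -i.2 → ∀ a ∈ grade i, counit a = 0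
  antipode_grade : ∀ i : L × L, ∀ a ∈ grade i, antipode a ∈ grade (i.2, i.1)

section Aux

variable {K L A : Type*} [Field K] [AddCommGroup L] [DecidableEq L]
    [AddCommGroup A] [Module K A]

theorem tsqMul_tmul (mul : A →ₗ[K] A →ₗ[K] A) (x y u v : A) :
    tsqMul mul ((x ⊗ₜ[K] y) ⊗ₜ[K] (u ⊗ₜ[K] v)) = mul x u ⊗ₜ[K] mul y v := by
  simp [tsqMul]

theorem LBigradedHopf.hom_induction (B : LBigradedHopf K L A) {P : A → Prop}
    (h0 : P 0) (hadd : ∀ x y, P x → P y → P (x + y))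
    (hhom : ∀ i : L × L, ∀ a ∈ B.grade i, P a) (a : A) : P a :=
  Submodule.iSup_induction (motive := P) _
    (by rw [B.internal.submodule_iSup_eq_top]; trivial) hhom h0 hadd

theorem sup_range_induction (g : L × L → Submodule K A) (i : L × L)
    {P : A ⊗[K] A → Prop}
    (h0 : P 0) (hadd : ∀ x y, P x → P y → P (x + y))
    (hsmul : ∀ (r : K) (x), P x → P (r • x))
    (hhom : ∀ ν : L, ∀ x ∈ g (i.1, ν), ∀ y ∈ g (-ν, i.2), P (x ⊗ₜ[K] y))
    {t : A ⊗[K] A}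
    (ht : t ∈ ⨆ ν : L, LinearMap.range
      (TensorProduct.map (g (i.1, ν)).subtype (g (-ν, i.2)).subtype)) : P t := by
  refine Submodule.iSup_induction (motive := P) _ ht (fun ν x hx => ?_) h0 hadd
  rw [TensorProduct.range_map_eq_span_tmul] at hx
  induction hx using Submodule.span_induction with
  | mem z hz =>
    obtain ⟨m, n, rfl⟩ := hz
    simpa using hhom ν m m.2 n n.2
  | zero => exact h0
  | add a b _ _ ha hb => exact hadd a b ha hb
  | smul r a _ ha => exact hsmul r a ha

end Aux

/- STATEMENT 7: Twisting the multiplication of an `L`-bigraded Hopf algebra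
`A` by an antisymmetric bicharacter `p` (keeping the unit, counit,
comultiplication and antipode) yields again an `L`-bigraded Hopf algebra
`A_p`, with the same grading. -/
theorem stmt_7 {K L A : Type*} [Field K] [AddCommGroup L] [DecidableEq L]
    [AddCommGroup A] [Module K A]
    (B : LBigradedHopf K L A) (p : L → L → Kˣ)
    (hp1 : ∀ a b c, p (a + b) c = p a c * p b c)
    (hp2 : ∀ a b c, p a (b + c) = p a b * p a c)
    (hp3 : ∀ a, p a a = 1)
    (hp4 : ∀ a b, p a b = p b (-a))
    (mul' : A →ₗ[K] A →ₗ[K] A)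
    (hmul' : ∀ i j : L × L, ∀ a ∈ B.grade i, ∀ b ∈ B.grade j,
      mul' a b = ((p i.1 j.1 * (p i.2 j.2)⁻¹ : Kˣ) : K) • B.mul a b) :
    ∃ B' : LBigradedHopf K L A, B'.mul = mul' ∧ B'.one = B.one ∧
      B'.counit = B.counit ∧ B'.comul = B.comul ∧
      B'.antipode = B.antipode ∧ B'.grade = B.grade := by
  -- scalar-level facts about the bicharacter, as elements of `K`
  have hq0 : ∀ a b : L, ((p a b : Kˣ) : K) ≠ 0 := fun a b => Units.ne_zero _
  have hq1 : ∀ a b c : L, ((p (a + b) c : Kˣ) : K) = (p a c : K) * (p b c : K) := by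
    intro a b c; exact_mod_cast congrArg Units.val (hp1 a b c)
  have hq2 : ∀ a b c : L, ((p a (b + c) : Kˣ) : K) = (p a b : K) * (p a c : K) := by
    intro a b c; exact_mod_cast congrArg Units.val (hp2 a b c)
  have hq3 : ∀ a : L, ((p a a : Kˣ) : K) = 1 := by
    intro a; simpa using congrArg Units.val (hp3 a)
  have hqz1 : ∀ b : L, ((p 0 b : Kˣ) : K) = 1 := by
    intro b
    have h := hq1 0 0 b
    rw [add_zero] at h
    exact (mul_left_cancel₀ (hq0 0 b) (by rw [mul_one]; exact h)).symm
  have hqz2 : ∀ a : L, ((p a 0 : Kˣ) : K) = 1 := by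
    intro a
    have h := hq2 a 0 0
    rw [add_zero] at h
    exact (mul_left_cancel₀ (hq0 a 0) (by rw [mul_one]; exact h)).symm
  have hqn1 : ∀ a b : L, ((p (-a) b : Kˣ) : K) = ((p a b : Kˣ) : K)⁻¹ := by
    intro a b
    have h := hq1 a (-a) b
    rw [add_neg_cancel, hqz1] at h
    exact (inv_eq_of_mul_eq_one_right h.symm).symm
  have hqn2 : ∀ a b : L, ((p a (-b) : Kˣ) : K) = ((p a b : Kˣ) : K)⁻¹ := by
    intro a b
    have h := hq2 a b (-b)
    rw [add_neg_cancel, hqz2] at h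
    exact (inv_eq_of_mul_eq_one_right h.symm).symm
  have hqnn : ∀ a b : L, ((p (-a) (-b) : Kˣ) : K) = ((p a b : Kˣ) : K) := by
    intro a b; rw [hqn1, hqn2, inv_inv]
  have hqaa : ∀ a : L, ((p a (-a) : Kˣ) : K) = 1 := by
    intro a; rw [hqn2, hq3, inv_one]
  -- the twisted multiplication on homogeneous elements, with `K`-valued scalar
  have hmul2 : ∀ i j : L × L, ∀ a ∈ B.grade i, ∀ b ∈ B.grade j,
      mul' a b = (((p i.1 j.1 : Kˣ) : K) * ((p i.2 j.2 : Kˣ) : K)⁻¹) • B.mul a b := by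
    intro i j a ha b hb
    rw [hmul' i j a ha b hb]
    congr 1
    rw [Units.val_mul, Units.val_inv_eq_inv_val]
  refine ⟨⟨mul', B.one, B.counit, B.comul, B.antipode, B.grade,
    ?_, ?_, ?_, B.internal, B.one_mem, ?_, B.coassoc, B.counit_left,
    B.counit_right, B.counit_one, ?_, B.comul_one, ?_, ?_, ?_,
    B.comul_grade, B.counit_grade, B.antipode_grade⟩, rfl, rfl, rfl, rfl, rfl, rfl⟩
  · -- associativity
    intro a b c
    refine B.hom_induction (P := fun a => ∀ b c,
        mul' (mul' a b) c = mul' a (mul' b c)) ?_ ?_ ?_ a b c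
    · intro b c; simp
    · intro x y hx hy b c
      simp [map_add, LinearMap.add_apply, hx b c, hy b c]
    · intro i a ha
      refine B.hom_induction (P := fun b => ∀ c,
          mul' (mul' a b) c = mul' a (mul' b c)) ?_ ?_ ?_
      · intro c; simp
      · intro x y hx hy c
        simp [map_add, LinearMap.add_apply, hx c, hy c]
      · intro j b hb
        refine B.hom_induction (P := fun c =>
            mul' (mul' a b) c = mul' a (mul' b c)) ?_ ?_ ?_
        · simp
        · intro x y hx hy; simp [map_add, hx, hy]
        · intro k c hc
          rw [hmul2 i j a ha b hb, hmul2 j k b hb c hc, map_smul,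
            LinearMap.smul_apply, map_smul,
            hmul2 (i + j) k (B.mul a b) (B.mul_mem i j a ha b hb) c hc,
            hmul2 i (j + k) a ha (B.mul b c) (B.mul_mem j k b hb c hc),
            smul_smul, smul_smul, B.mul_assoc']
          congr 1
          simp only [Prod.fst_add, Prod.snd_add, hq1, hq2]
          field_simp
  · -- one_mul
    intro a
    refine B.hom_induction (P := fun a => mul' B.one a = a) (by simp) ?_ ?_ a
    · intro x y hx hy; simp [hx, hy]
    · intro i a ha
      rw [hmul2 0 i B.one B.one_mem a ha, B.one_mul']
      simp [Prod.fst_zero, Prod.snd_zero, hqz1]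
  · -- mul_one
    intro a
    refine B.hom_induction (P := fun a => mul' a B.one = a) (by simp) ?_ ?_ a
    · intro x y hx hy; simp [map_add, LinearMap.add_apply, hx, hy]
    · intro i a ha
      rw [hmul2 i 0 a ha B.one B.one_mem, B.mul_one']
      simp [Prod.fst_zero, Prod.snd_zero, hqz2]
  · -- mul_mem
    intro i j a ha b hb
    rw [hmul' i j a ha b hb]
    exact Submodule.smul_mem _ _ (B.mul_mem i j a ha b hb)
  · -- counit_mul
    intro a b
    refine B.hom_induction (P := fun a => ∀ b,
        B.counit (mul' a b) = B.counit a * B.counit b) ?_ ?_ ?_ a b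
    · intro b; simp
    · intro x y hx hy b
      simp [map_add, LinearMap.add_apply, hx b, hy b, add_mul]
    · intro i a ha
      refine B.hom_induction (P := fun b =>
          B.counit (mul' a b) = B.counit a * B.counit b) (by simp) ?_ ?_
      · intro x y hx hy; simp [map_add, hx, hy, mul_add]
      · intro j b hb
        rw [hmul2 i j a ha b hb, map_smul, smul_eq_mul, B.counit_mul]
        by_cases h1 : i.1 = -i.2
        · by_cases h2 : j.1 = -j.2
          · rw [h1, h2, hqnn]
            field_simp
          · rw [B.counit_grade j h2 b hb]; ring
        · rw [B.counit_grade i h1 a ha]; ring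
  · -- comul_mul
    intro a b
    refine B.hom_induction (P := fun a => ∀ b,
        B.comul (mul' a b) = tsqMul mul' (B.comul a ⊗ₜ[K] B.comul b)) ?_ ?_ ?_ a b
    · intro b; simp
    · intro x y hx hy b
      simp [map_add, LinearMap.add_apply, add_tmul, hx b, hy b]
    · intro i a ha
      refine B.hom_induction (P := fun b =>
          B.comul (mul' a b) = tsqMul mul' (B.comul a ⊗ₜ[K] B.comul b)) ?_ ?_ ?_
      · simp
      · intro x y hx hy; simp [map_add, tmul_add, hx, hy]
      · intro j b hb
        rw [hmul2 i j a ha b hb, map_smul, B.comul_mul]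
        have key : ∀ ta ∈ (⨆ ν : L, LinearMap.range (TensorProduct.map
              (B.grade (i.1, ν)).subtype (B.grade (-ν, i.2)).subtype)),
            ∀ tb ∈ (⨆ μ : L, LinearMap.range (TensorProduct.map
              (B.grade (j.1, μ)).subtype (B.grade (-μ, j.2)).subtype)),
            tsqMul mul' (ta ⊗ₜ[K] tb) =
              (((p i.1 j.1 : Kˣ) : K) * ((p i.2 j.2 : Kˣ) : K)⁻¹) •
                tsqMul B.mul (ta ⊗ₜ[K] tb) := by
          intro ta hta
          refine sup_range_induction B.grade i (P := fun ta => ∀ tb ∈ _,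
            tsqMul mul' (ta ⊗ₜ[K] tb) = _ • tsqMul B.mul (ta ⊗ₜ[K] tb))
            ?_ ?_ ?_ ?_ hta
          · intro tb htb; simp
          · intro x y hx hy tb htb
            simp [add_tmul, hx tb htb, hy tb htb]
          · intro r x hx tb htb
            rw [← smul_tmul', map_smul, map_smul, hx tb htb, smul_comm]
          · intro ν x hx y hy tb htb
            refine sup_range_induction B.grade j (P := fun tb =>
              tsqMul mul' ((x ⊗ₜ[K] y) ⊗ₜ[K] tb) =
                _ • tsqMul B.mul ((x ⊗ₜ[K] y) ⊗ₜ[K] tb)) ?_ ?_ ?_ ?_ htb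
            · simp
            · intro s t hs ht; simp [tmul_add, hs, ht]
            · intro r s hs
              rw [tmul_smul, map_smul, map_smul, hs, smul_comm]
            · intro μ u hu v hv
              rw [tsqMul_tmul, tsqMul_tmul,
                hmul2 (i.1, ν) (j.1, μ) x hx u hu,
                hmul2 (-ν, i.2) (-μ, j.2) y hy v hv,
                tmul_smul, ← smul_tmul', smul_smul]
              congr 1
              simp only [hqnn]
              field_simp
        rw [key (B.comul a) (B.comul_grade i a ha) (B.comul b) (B.comul_grade j b hb)]
  · -- antipode_left
    intro a
    refine B.hom_induction (P := fun a =>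
        TensorProduct.lift mul' (TensorProduct.map B.antipode LinearMap.id (B.comul a)) =
          B.counit a • B.one) (by simp) ?_ ?_ a
    · intro x y hx hy; simp [map_add, hx, hy, add_smul]
    · intro i a ha
      have key : ∀ t ∈ (⨆ ν : L, LinearMap.range (TensorProduct.map
            (B.grade (i.1, ν)).subtype (B.grade (-ν, i.2)).subtype)),
          TensorProduct.lift mul' (TensorProduct.map B.antipode LinearMap.id t) =
            ((p i.1 i.2 : Kˣ) : K)⁻¹ •
              TensorProduct.lift B.mul (TensorProduct.map B.antipode LinearMap.id t) := by
        intro t ht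
        refine sup_range_induction B.grade i (P := fun t =>
          TensorProduct.lift mul' (TensorProduct.map B.antipode LinearMap.id t) =
            ((p i.1 i.2 : Kˣ) : K)⁻¹ •
              TensorProduct.lift B.mul (TensorProduct.map B.antipode LinearMap.id t))
          ?_ ?_ ?_ ?_ ht
        · simp
        · intro x y hx hy; simp [map_add, hx, hy]
        · intro r x hx
          simp only [map_smul]
          rw [hx, smul_comm]
        · intro ν x hx y hy
          have hSx : B.antipode x ∈ B.grade (ν, i.1) := B.antipode_grade (i.1, ν) x hx
          simp only [TensorProduct.map_tmul, LinearMap.id_coe, id_eq,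
            TensorProduct.lift.tmul]
          rw [hmul2 (ν, i.1) (-ν, i.2) (B.antipode x) hSx y hy]
          simp [hqaa, hqn1]
      rw [key (B.comul a) (B.comul_grade i a ha), B.antipode_left, smul_smul]
      congr 1
      by_cases h1 : i.1 = -i.2
      · simp [h1, hqn1, hq3]
      · rw [B.counit_grade i h1 a ha, mul_zero]
  · -- antipode_right
    intro a
    refine B.hom_induction (P := fun a =>
        TensorProduct.lift mul' (TensorProduct.map LinearMap.id B.antipode (B.comul a)) =
          B.counit a • B.one) (by simp) ?_ ?_ a
    · intro x y hx hy; simp [map_add, hx, hy, add_smul]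
    · intro i a ha
      have key : ∀ t ∈ (⨆ ν : L, LinearMap.range (TensorProduct.map
            (B.grade (i.1, ν)).subtype (B.grade (-ν, i.2)).subtype)),
          TensorProduct.lift mul' (TensorProduct.map LinearMap.id B.antipode t) =
            ((p i.1 i.2 : Kˣ) : K) •
              TensorProduct.lift B.mul (TensorProduct.map LinearMap.id B.antipode t) := by
        intro t ht
        refine sup_range_induction B.grade i (P := fun t =>
          TensorProduct.lift mul' (TensorProduct.map LinearMap.id B.antipode t) =
            ((p i.1 i.2 : Kˣ) : K) •
              TensorProduct.lift B.mul (TensorProduct.map LinearMap.id B.antipode t))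
          ?_ ?_ ?_ ?_ ht
        · simp
        · intro x y hx hy; simp [map_add, hx, hy]
        · intro r x hx
          simp only [map_smul]
          rw [hx, smul_comm]
        · intro ν x hx y hy
          have hSy : B.antipode y ∈ B.grade (i.2, -ν) := by
            simpa using B.antipode_grade (-ν, i.2) y hy
          simp only [TensorProduct.map_tmul, LinearMap.id_coe, id_eq,
            TensorProduct.lift.tmul]
          rw [hmul2 (i.1, ν) (i.2, -ν) x hx (B.antipode y) hSy]
          simp [hqaa]
      rw [key (B.comul a) (B.comul_grade i a ha), B.antipode_right, smul_smul]
      congr 1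
      by_cases h1 : i.1 = -i.2
      · simp [h1, hqn1, hq3]
      · rw [B.counit_grade i h1 a ha, mul_zero]
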